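/- Let g ≥ 2 be an integer and p a prime with gcd(p, g) = 1. Then the set { (g^{(p−1)i} − 1)/p : i ∈ ℕ } of integers is unbounded with respect to the word metric d_g, i.e., the word lengths ℓ_g((g^{(p−1)i} − 1)/p) are not bounded above. -/

import Mathlib

/-- The generating set `S_g = {± g^k : k ∈ ℕ}` in `ℤ`. -/
def Sg (g : ℤ) : Set ℤ := {x | ∃ n : ℕ, x = g ^ n ∨ x = -g ^ n}

/-- The word length of `k` with respect to `S_g`. -/
noncomputable def wlen (g : ℤ) (k : ℤ) : ℕ :=
  sInf {m | ∃ l : List ℤ, (∀ x ∈ l, x ∈ Sg g) ∧ l.length = m ∧ l.sum = k}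

lemma wlen_set_nonempty (g k : ℤ) :
    {m | ∃ l : List ℤ, (∀ x ∈ l, x ∈ Sg g) ∧ l.length = m ∧ l.sum = k}.Nonempty := by
  rcases le_or_gt 0 k with hk | hk
  · refine ⟨k.toNat, List.replicate k.toNat 1, ?_, by simp, ?_⟩
    · intro x hx
      rw [List.eq_of_mem_replicate hx]
      exact ⟨0, Or.inl (by simp)⟩
    · simp [List.sum_replicate, Int.toNat_of_nonneg hk]
  · refine ⟨(-k).toNat, List.replicate (-k).toNat (-1), ?_, by simp, ?_⟩
    · intro x hx
      rw [List.eq_of_mem_replicate hx]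
      exact ⟨0, Or.inr (by simp)⟩
    · have : (0:ℤ) ≤ -k := by omega
      simp [List.sum_replicate, smul_eq_mul]
      omega

lemma sum_filter_add_sum_filter_not' (l : List ℤ) (f : ℤ → Bool) :
    (l.filter f).sum + (l.filter (fun x => !f x)).sum = l.sum := by
  induction l with
  | nil => simp
  | cons a t ih =>
    by_cases h : f a = true <;>
      simp [List.filter_cons, h, ← ih] <;> ring

theorem stmt_6 (g : ℤ) (hg : 2 ≤ g) (p : ℕ) (hp : p.Prime)
    (hcop : IsCoprime (p : ℤ) g) :
    ¬ ∃ C : ℕ, ∀ i : ℕ, wlen g ((g ^ ((p - 1) * i) - 1) / (p : ℤ)) ≤ C := by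
  rintro ⟨C, hC⟩
  haveI := Fact.mk hp
  have hp2 : 2 ≤ p := hp.two_le
  have hg0 : (0:ℤ) < g := by omega
  have hgn : 1 < g.natAbs := by omega
  set B : ℕ := p * (C + 2) with hB
  set i : ℕ := (C + 1) * B with hi
  set N : ℕ := (p - 1) * i with hN
  -- p divides g^N - 1
  have hgz : (g : ZMod p) ≠ 0 := by
    intro h
    have hdvd : (p:ℤ) ∣ g := (ZMod.intCast_zmod_eq_zero_iff_dvd g p).mp h
    have hu : IsUnit ((p:ℕ):ℤ) := IsCoprime.isUnit_of_dvd' hcop dvd_rfl hdvd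
    rw [Int.isUnit_iff] at hu
    omega
  have hdvdN : (p:ℤ) ∣ g ^ N - 1 := by
    have h1 : (g : ZMod p) ^ (p-1) = 1 := ZMod.pow_card_sub_one_eq_one hgz
    have h0 : ((g ^ N - 1 : ℤ) : ZMod p) = 0 := by
      push_cast
      rw [hN, pow_mul, h1, one_pow]
      ring
    exact (ZMod.intCast_zmod_eq_zero_iff_dvd _ p).mp h0
  set k : ℤ := (g ^ N - 1) / (p:ℤ) with hk
  have hpk : (p:ℤ) * k = g ^ N - 1 := Int.mul_ediv_cancel' hdvdN
  -- extract a representing list of length ≤ C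
  have hmem : wlen g k ∈ {m | ∃ l : List ℤ, (∀ x ∈ l, x ∈ Sg g) ∧ l.length = m ∧ l.sum = k} :=
    Nat.sInf_mem (wlen_set_nonempty g k)
  obtain ⟨l, hl, hlen, hsum⟩ := hmem
  have hlenC : l.length ≤ C := by
    rw [hlen]
    exact hC i
  -- each element's exponent
  have hexp : ∀ x ∈ l, x.natAbs = g.natAbs ^ (Nat.log g.natAbs x.natAbs) := by
    intro x hx
    obtain ⟨n, hn | hn⟩ := hl x hx
    · have hxa : x.natAbs = g.natAbs ^ n := by rw [hn, Int.natAbs_pow]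
      rw [hxa, Nat.log_pow hgn]
    · have hxa : x.natAbs = g.natAbs ^ n := by rw [hn, Int.natAbs_neg, Int.natAbs_pow]
      rw [hxa, Nat.log_pow hgn]
  -- pigeonhole: find a gap
  have hBpos : 0 < B := by positivity
  obtain ⟨j, hjC, hjJ⟩ :
      ∃ j, j ≤ C ∧ j ∉ l.toFinset.image (fun x => Nat.log g.natAbs x.natAbs / B) := by
    by_contra h
    push_neg at h
    have hsub : Finset.range (C+1) ⊆
        l.toFinset.image (fun x => Nat.log g.natAbs x.natAbs / B) := by
      intro j hj
      exact h j (by simpa using Nat.lt_succ_iff.mp (Finset.mem_range.mp hj))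
    have h1 := Finset.card_le_card hsub
    have h2 := Finset.card_image_le
      (s := l.toFinset) (f := fun x : ℤ => Nat.log g.natAbs x.natAbs / B)
    have h3 := l.toFinset_card_le
    rw [Finset.card_range] at h1
    omega
  set T : ℕ := j * B with hT
  set M : ℕ := (j+1) * B with hM
  have hMN : M ≤ N := by
    have : (j+1) * B ≤ (C+1) * B := Nat.mul_le_mul_right B (by omega)
    calc M ≤ (C+1) * B := this
    _ ≤ ((C+1) * B) * (p-1) := Nat.le_mul_of_pos_right _ (by omega)
    _ = N := by rw [hN, hi]; ring
  have hgap : ∀ x ∈ l, Nat.log g.natAbs x.natAbs < T ∨ M ≤ Nat.log g.natAbs x.natAbs := by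
    intro x hx
    have hne : Nat.log g.natAbs x.natAbs / B ≠ j := by
      intro h
      exact hjJ (Finset.mem_image.mpr ⟨x, List.mem_toFinset.mpr hx, h⟩)
    by_contra hcon
    push_neg at hcon
    obtain ⟨h1, h2⟩ := hcon
    exact hne (Nat.div_eq_of_lt_le (by omega) (by omega))
  -- split the sum
  set f : ℤ → Bool := fun x => decide (x.natAbs < g.natAbs ^ T) with hf
  set S1 : ℤ := (l.filter f).sum with hS1
  set S2 : ℤ := (l.filter (fun x => !f x)).sum with hS2
  have hsplit : S1 + S2 = k := by
    rw [hS1, hS2, sum_filter_add_sum_filter_not' l f, hsum]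
  -- bound on S1
  have habs : ∀ x ∈ l.filter f, -(g^T - 1) ≤ x ∧ x ≤ g^T - 1 := by
    intro x hx
    obtain ⟨hxl, hxf⟩ := List.mem_filter.mp hx
    rw [hf] at hxf
    have hlt : x.natAbs < g.natAbs ^ T := by simpa using hxf
    have : (x.natAbs : ℤ) < (g.natAbs : ℤ) ^ T := by exact_mod_cast hlt
    have hge : ((g.natAbs : ℤ)) = g := by omega
    rw [hge] at this
    constructor <;> omega
  have hS1ub : S1 ≤ (C : ℤ) * (g^T - 1) := by
    have h1 : S1 ≤ (l.filter f).length • (g^T - 1) :=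
      List.sum_le_card_nsmul _ _ (fun x hx => (habs x hx).2)
    have h2 : (l.filter f).length ≤ C := le_trans (List.length_filter_le _ _) hlenC
    have h3 : ((l.filter f).length : ℤ) * (g^T - 1) ≤ (C:ℤ) * (g^T-1) := by
      have : (0:ℤ) ≤ g^T - 1 := by
        have := pow_pos hg0 T
        omega
      exact mul_le_mul_of_nonneg_right (by exact_mod_cast h2) this
    calc S1 ≤ (l.filter f).length • (g^T - 1) := h1
    _ = ((l.filter f).length : ℤ) * (g^T - 1) := by rw [nsmul_eq_mul]
    _ ≤ (C:ℤ) * (g^T-1) := h3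
  have hS1lb : -((C : ℤ) * (g^T - 1)) ≤ S1 := by
    have h1 : (l.filter f).length • (-(g^T - 1)) ≤ S1 :=
      List.card_nsmul_le_sum _ _ (fun x hx => (habs x hx).1)
    have h2 : (l.filter f).length ≤ C := le_trans (List.length_filter_le _ _) hlenC
    have hpos : (0:ℤ) ≤ g^T - 1 := by
      have := pow_pos hg0 T
      omega
    have h3 : -((C:ℤ) * (g^T-1)) ≤ ((l.filter f).length : ℤ) * (-(g^T - 1)) := by
      rw [mul_neg, neg_le_neg_iff]
      exact mul_le_mul_of_nonneg_right (by exact_mod_cast h2) hpos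
    calc -((C:ℤ) * (g^T-1)) ≤ ((l.filter f).length : ℤ) * (-(g^T - 1)) := h3
    _ = (l.filter f).length • (-(g^T - 1)) := by rw [nsmul_eq_mul]
    _ ≤ S1 := h1
  -- divisibility of S2
  have hS2dvd : g^M ∣ S2 := by
    apply List.dvd_sum
    intro x hx
    obtain ⟨hxl, hxf⟩ := List.mem_filter.mp hx
    rw [hf] at hxf
    have hge : ¬ (x.natAbs < g.natAbs ^ T) := by simpa using hxf
    have hxe := hexp x hxl
    have hTle : T ≤ Nat.log g.natAbs x.natAbs := by
      by_contra hlt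
      push_neg at hlt
      apply hge
      rw [hxe]
      exact Nat.pow_lt_pow_right hgn hlt
    have hMle : M ≤ Nat.log g.natAbs x.natAbs := by
      rcases hgap x hxl with h | h
      · omega
      · exact h
    have h1 : g ^ M ∣ g ^ (Nat.log g.natAbs x.natAbs) := pow_dvd_pow g hMle
    have h2 : g ^ (Nat.log g.natAbs x.natAbs) ∣ x := by
      have : ((x.natAbs : ℤ)) ∣ x := Int.natAbs_dvd.mpr dvd_rfl
      have hcast := congrArg (Nat.cast : ℕ → ℤ) hxe
      rw [Nat.cast_pow, Int.natAbs_of_nonneg hg0.le] at hcast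
      rwa [hcast] at this
    exact dvd_trans h1 h2
  -- the key integer
  set z : ℤ := (p:ℤ) * S1 + 1 with hz
  have hzdvd : g ^ M ∣ z := by
    have hzeq : z = g ^ N - (p:ℤ) * S2 := by
      have : S1 = k - S2 := by omega
      rw [hz, this, mul_sub]
      linarith [hpk]
    rw [hzeq]
    exact dvd_sub (pow_dvd_pow g hMN) (Dvd.dvd.mul_left hS2dvd _)
  have hz0 : z ≠ 0 := by
    intro h0
    have h0' : (p:ℤ) * S1 + 1 = 0 := by rw [← hz]; exact h0
    have : (p:ℤ) ∣ 1 := ⟨-S1, by linear_combination h0'⟩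
    have := Int.le_of_dvd one_pos this
    omega
  have hle : g ^ M ≤ |z| := Int.le_of_dvd (abs_pos.mpr hz0) ((dvd_abs _ _).mpr hzdvd)
  -- size contradiction
  have hgB : (p:ℤ) * C + 1 < g ^ B := by
    have h2B : (B:ℤ) < 2 ^ B := by exact_mod_cast (Nat.lt_two_pow_self (n := B))
    have hgB2 : (2:ℤ) ^ B ≤ g ^ B := pow_le_pow_left₀ (by norm_num) (by omega) B
    have hBc : ((B:ℕ):ℤ) = (p:ℤ) * ((C:ℤ)+2) := by rw [hB]; push_cast; ring
    have hpc : (2:ℤ) ≤ (p:ℤ) := by exact_mod_cast hp2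
    have hC0 : (0:ℤ) ≤ (C:ℤ) := by positivity
    have h1 : (p:ℤ) * C + 1 < (p:ℤ) * ((C:ℤ)+2) := by nlinarith
    have h2B' : (p:ℤ) * ((C:ℤ)+2) < 2 ^ B := by rw [← hBc]; exact h2B
    linarith
  have hT1 : (1:ℤ) ≤ g ^ T := by have := pow_pos hg0 T; omega
  have hp0 : (0:ℤ) ≤ (p:ℤ) := by positivity
  have hzabs : |z| ≤ (p:ℤ) * C * (g^T - 1) + 1 := by
    have hm1 : (p:ℤ) * (-((C:ℤ)*(g^T-1))) ≤ (p:ℤ) * S1 :=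
      mul_le_mul_of_nonneg_left hS1lb hp0
    have hm2 : (p:ℤ) * S1 ≤ (p:ℤ) * ((C:ℤ)*(g^T-1)) :=
      mul_le_mul_of_nonneg_left hS1ub hp0
    rw [hz, abs_le]
    constructor
    · linarith
    · linarith
  have hMeq : g ^ M = g ^ T * g ^ B := by
    rw [hM, hT, ← pow_add]
    ring_nf
  have : g ^ T * g ^ B ≤ (p:ℤ) * C * (g^T - 1) + 1 := by
    rw [← hMeq]
    exact le_trans hle hzabs
  have hTpos : (0:ℤ) < g ^ T := pow_pos hg0 T
  have hpC0 : (0:ℤ) ≤ (p:ℤ) * C := by positivity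
  have hkey : ((p:ℤ) * C + 1) * g ^ T < g ^ B * g ^ T :=
    mul_lt_mul_of_pos_right hgB hTpos
  linarith
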